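/- Let Δ be a self-adjoint positive semidefinite linear operator on a finite-dimensional real inner product space V, and let ξ : ℝ → V solve the linear ODE dξ/dt = -αΔξ with α > 0 and initial condition ξ(0) = ξ_0. Then ξ(t) converges as t → ∞ to the orthogonal projection of ξ_0 onto ker Δ. -/

import Mathlib

open scoped RealInnerProductSpace

variable {V : Type} [NormedAddCommGroup V] [InnerProductSpace ℝ V] [FiniteDimensional ℝ V]

lemma psd_inner_self_zero (Δ : V →ₗ[ℝ] V) (hsa : LinearMap.IsSymmetric Δ)
    (hpsd : ∀ v : V, 0 ≤ ⟪v, Δ v⟫) {v : V} (hv : ⟪v, Δ v⟫ = 0) : Δ v = 0 := by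
  have h : ∀ u : V, ⟪u, Δ v⟫ = 0 := by
    intro u
    by_contra ha
    set a := ⟪u, Δ v⟫ with ha'
    set t : ℝ := -(⟪u, Δ u⟫ + 1) / (2 * a) with ht
    have hsym : ⟪v, Δ u⟫ = a := by rw [← hsa v u, real_inner_comm]
    have hexp : ⟪u + t • v, Δ (u + t • v)⟫ = ⟪u, Δ u⟫ + 2 * t * a := by
      rw [map_add, map_smul]
      rw [inner_add_left, inner_add_right, inner_add_right,
        real_inner_smul_left, real_inner_smul_left, real_inner_smul_right,
        real_inner_smul_right, hv, hsym, ← ha']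
      ring
    have h2 : 2 * t * a = -(⟪u, Δ u⟫ + 1) := by
      rw [ht]; field_simp
    have := hpsd (u + t • v)
    rw [hexp, h2] at this
    linarith
  have h2 := h (Δ v)
  exact inner_self_eq_zero.mp h2

lemma exists_coercive (Δ : V →ₗ[ℝ] V) (hsa : LinearMap.IsSymmetric Δ)
    (hpsd : ∀ v : V, 0 ≤ ⟪v, Δ v⟫) :
    ∃ lam : ℝ, 0 < lam ∧ ∀ v ∈ (LinearMap.ker Δ)ᗮ, lam * ‖v‖ ^ 2 ≤ ⟪v, Δ v⟫ := by
  set K := (LinearMap.ker Δ)ᗮ with hK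
  set S := Metric.sphere (0 : V) 1 ∩ (K : Set V) with hS
  have hker : ∀ v : V, v ∈ K → Δ v = 0 → v = 0 := by
    intro v hvK hv0
    have := (Submodule.mem_orthogonal _ v).mp hvK v hv0
    simpa [inner_self_eq_zero] using this
  by_cases hSne : S.Nonempty
  · have hc : IsCompact S :=
      (isCompact_sphere (0 : V) 1).inter_right (Submodule.closed_of_finiteDimensional K)
    have hcont : Continuous fun v : V => ⟪v, Δ v⟫ :=
      Continuous.inner continuous_id (Δ.continuous_of_finiteDimensional)
    obtain ⟨v₀, hv₀S, hmin⟩ := hc.exists_isMinOn hSne hcont.continuousOn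
    refine ⟨⟪v₀, Δ v₀⟫, ?_, ?_⟩
    · rcases (hpsd v₀).lt_or_eq with h | h
      · exact h
      · exfalso
        have hΔ0 : Δ v₀ = 0 := psd_inner_self_zero Δ hsa hpsd h.symm
        have h0 : v₀ = 0 := hker v₀ hv₀S.2 hΔ0
        have h1 := hv₀S.1
        rw [h0] at h1
        simp at h1
    · intro v hvK
      rcases eq_or_ne v 0 with rfl | hv0
      · simp
      · have hn : ‖v‖ ≠ 0 := norm_ne_zero_iff.mpr hv0
        set w : V := ‖v‖⁻¹ • v with hw
        have hwS : w ∈ S := by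
          constructor
          · simp [hw, norm_smul, abs_of_nonneg (inv_nonneg.mpr (norm_nonneg v)),
              inv_mul_cancel₀ hn]
          · exact K.smul_mem _ hvK
        have hle : ⟪v₀, Δ v₀⟫ ≤ ⟪w, Δ w⟫ := hmin hwS
        have hexp : ⟪w, Δ w⟫ = ‖v‖⁻¹ ^ 2 * ⟪v, Δ v⟫ := by
          rw [hw, map_smul, real_inner_smul_left, real_inner_smul_right]
          ring
        rw [hexp] at hle
        have hpos : (0:ℝ) < ‖v‖ ^ 2 := by positivity
        have hinv : ‖v‖⁻¹ ^ 2 = (‖v‖ ^ 2)⁻¹ := by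
          rw [inv_pow]
        rw [hinv, le_inv_mul_iff₀ hpos] at hle
        linarith [hle]
  · refine ⟨1, one_pos, ?_⟩
    intro v hvK
    rcases eq_or_ne v 0 with rfl | hv0
    · simp
    · exfalso
      apply hSne
      refine ⟨‖v‖⁻¹ • v, ?_, K.smul_mem _ hvK⟩
      simp [norm_smul, abs_of_nonneg (inv_nonneg.mpr (norm_nonneg v)),
        inv_mul_cancel₀ (norm_ne_zero_iff.mpr hv0)]

/-- Solutions of the heat equation `dξ/dt = -αΔξ` for a self-adjoint positive
semidefinite operator `Δ` converge to the orthogonal projection of the initial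
condition onto `ker Δ`. -/
theorem heat_flow_tendsto_orthogonalProjection_ker
    {V : Type} [NormedAddCommGroup V] [InnerProductSpace ℝ V] [FiniteDimensional ℝ V]
    (Δ : V →ₗ[ℝ] V) (hsa : LinearMap.IsSymmetric Δ) (hpsd : ∀ v : V, 0 ≤ ⟪v, Δ v⟫)
    (α : ℝ) (hα : 0 < α) (ξ : ℝ → V) (ξ₀ : V) (hinit : ξ 0 = ξ₀)
    (hode : ∀ t : ℝ, HasDerivAt ξ (-(α • Δ (ξ t))) t) :
    Filter.Tendsto ξ Filter.atTop
      (nhds (Submodule.orthogonalProjectionOnto (LinearMap.ker Δ) ξ₀ : V)) := by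
  set K := LinearMap.ker Δ with hK
  set P : V := (Submodule.orthogonalProjectionOnto K ξ₀ : V) with hP
  have hPK : P ∈ K := (Submodule.orthogonalProjectionOnto K ξ₀).2
  have hΔP : Δ P = 0 := hPK
  set η : ℝ → V := fun t => ξ t - P with hη
  have hη' : ∀ t, HasDerivAt η (-(α • Δ (η t))) t := by
    intro t
    have h := (hode t).sub_const P
    have : Δ (η t) = Δ (ξ t) := by rw [hη]; simp [map_sub, hΔP]
    rw [this]
    exact h
  -- η stays in Kᗮ
  have hmem : ∀ t, η t ∈ Kᗮ := by
    intro t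
    rw [Submodule.mem_orthogonal]
    intro k hk
    have hΔk : Δ k = 0 := hk
    have hd : ∀ s : ℝ, HasDerivAt (fun s => ⟪k, η s⟫) 0 s := by
      intro s
      have h := (hasDerivAt_const s k).inner ℝ (hη' s)
      have hz : ⟪k, -(α • Δ (η s))⟫ + ⟪(0:V), η s⟫ = 0 := by
        rw [inner_neg_right, real_inner_smul_right, ← hsa k (η s), hΔk]
        simp
      rwa [hz] at h
    have hconst : ⟪k, η t⟫ = ⟪k, η 0⟫ := by
      have := is_const_of_deriv_eq_zero (fun s => (hd s).differentiableAt)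
        (fun s => (hd s).deriv) t 0
      exact this
    rw [hconst, hη]
    simp only [hinit]
    have horth : ξ₀ - P ∈ Kᗮ := Submodule.sub_starProjection_mem_orthogonal (K := K) ξ₀
    exact (Submodule.mem_orthogonal _ _).mp horth k hk
  obtain ⟨lam, hlam, hco⟩ := exists_coercive Δ hsa hpsd
  set f : ℝ → ℝ := fun t => ⟪η t, η t⟫ with hf
  have hf' : ∀ t, HasDerivAt f (-(2 * α) * ⟪η t, Δ (η t)⟫) t := by
    intro t
    have h := (hη' t).inner ℝ (hη' t)
    have he : ⟪η t, -(α • Δ (η t))⟫ + ⟪-(α • Δ (η t)), η t⟫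
        = -(2 * α) * ⟪η t, Δ (η t)⟫ := by
      rw [inner_neg_right, inner_neg_left, real_inner_smul_right, real_inner_smul_left,
        real_inner_comm (Δ (η t)) (η t)]
      ring
    rwa [he] at h
  set g : ℝ → ℝ := fun t => f t * Real.exp (2 * α * lam * t) with hg
  set g' : ℝ → ℝ := fun t =>
    (-(2 * α) * ⟪η t, Δ (η t)⟫) * Real.exp (2 * α * lam * t)
      + f t * (Real.exp (2 * α * lam * t) * (2 * α * lam)) with hg'
  have hgd : ∀ t, HasDerivAt g (g' t) t := by
    intro t
    have he : HasDerivAt (fun t : ℝ => Real.exp (2 * α * lam * t))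
        (Real.exp (2 * α * lam * t) * (2 * α * lam)) t := by
      have : HasDerivAt (fun t : ℝ => 2 * α * lam * t) (2 * α * lam) t := by
        simpa using (hasDerivAt_id t).const_mul (2 * α * lam)
      exact this.exp
    exact (hf' t).mul he
  have hgnp : ∀ t, g' t ≤ 0 := by
    intro t
    have h1 : lam * ‖η t‖ ^ 2 ≤ ⟪η t, Δ (η t)⟫ := hco _ (hmem t)
    have h2 : f t = ‖η t‖ ^ 2 := real_inner_self_eq_norm_sq _
    have hepos : 0 < Real.exp (2 * α * lam * t) := Real.exp_pos _
    have h3 : (-(2 * α) * ⟪η t, Δ (η t)⟫) + f t * (2 * α * lam) ≤ 0 := by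
      rw [h2]; nlinarith
    have h4 := mul_le_mul_of_nonneg_right h3 hepos.le
    rw [zero_mul] at h4
    show (-(2 * α) * ⟪η t, Δ (η t)⟫) * Real.exp (2 * α * lam * t)
      + f t * (Real.exp (2 * α * lam * t) * (2 * α * lam)) ≤ 0
    nlinarith [h4]
  have hanti : Antitone g := antitone_of_hasDerivAt_nonpos hgd hgnp
  -- bound f
  have hbound : ∀ t : ℝ, 0 ≤ t → f t ≤ f 0 * Real.exp (-(2 * α * lam * t)) := by
    intro t ht
    have := hanti ht
    rw [hg] at this
    simp only [mul_zero, Real.exp_zero, mul_one] at this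
    have hepos : 0 < Real.exp (2 * α * lam * t) := Real.exp_pos _
    rw [Real.exp_neg, ← div_eq_mul_inv, le_div_iff₀ hepos]
    exact this
  have hfz : Filter.Tendsto f Filter.atTop (nhds 0) := by
    apply squeeze_zero' (g := fun t => f 0 * Real.exp (-(2 * α * lam * t)))
    · exact Filter.Eventually.of_forall fun t => real_inner_self_nonneg
    · exact Filter.eventually_atTop.mpr ⟨0, fun t ht => hbound t ht⟩
    · have h1 : Filter.Tendsto (fun t : ℝ => 2 * α * lam * t) Filter.atTop Filter.atTop :=
        Filter.Tendsto.const_mul_atTop (by positivity) Filter.tendsto_id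
      have h2 : Filter.Tendsto (fun t : ℝ => Real.exp (-(2 * α * lam * t)))
          Filter.atTop (nhds 0) :=
        Real.tendsto_exp_atBot.comp (Filter.tendsto_neg_atBot_iff.mpr h1)
      have h3 := h2.const_mul (f 0)
      simpa using h3
  have hnorm : Filter.Tendsto (fun t => ‖η t‖) Filter.atTop (nhds 0) := by
    have : Filter.Tendsto (fun t => Real.sqrt (f t)) Filter.atTop (nhds (Real.sqrt 0)) :=
      (Real.continuous_sqrt.continuousAt).tendsto.comp hfz
    rw [Real.sqrt_zero] at this
    convert this using 2 with t
    show ‖η t‖ = Real.sqrt ⟪η t, η t⟫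
    rw [real_inner_self_eq_norm_sq, Real.sqrt_sq (norm_nonneg _)]
  have hη0 : Filter.Tendsto η Filter.atTop (nhds 0) :=
    tendsto_zero_iff_norm_tendsto_zero.mpr hnorm
  have := hη0.add_const P
  simp only [zero_add] at this
  convert this using 2 with t
  simp [hη]
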